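/- Assume Souslin's Hypothesis, i.e. that every ccc linearly ordered topological space is separable. Then every ccc compact Hausdorff space which is a continuous image of some compact linearly ordered topological space has a dense metrizable subspace. -/

import Mathlib

universe u

open Set Topology

/-- The character of a space `X` at a point `x`: the least cardinality of a
neighborhood base of `X` at `x`. -/
noncomputable def nhdsChar (X : Type u) [TopologicalSpace X] (x : X) : Cardinal.{u} :=
  sInf { c | ∃ B : Set (Set X), Cardinal.mk B = c ∧ (∀ U ∈ B, U ∈ nhds x) ∧
      ∀ V ∈ nhds x, ∃ U ∈ B, U ⊆ V }

/-- The character of a space: `χ(X) = sup_{x ∈ X} χ(x, X)`. -/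
noncomputable def spaceChar (X : Type u) [TopologicalSpace X] : Cardinal.{u} :=
  ⨆ x : X, nhdsChar X x

/-- The cellularity of a space: the supremum of cardinalities of pairwise disjoint
families of nonempty open subsets. -/
noncomputable def cellularity (X : Type u) [TopologicalSpace X] : Cardinal.{u} :=
  sSup { c | ∃ 𝒰 : Set (Set X), Cardinal.mk 𝒰 = c ∧ (∀ U ∈ 𝒰, IsOpen U ∧ U.Nonempty) ∧
      𝒰.PairwiseDisjoint id }

/-- The density of a space: the least cardinality of a dense subset. -/
noncomputable def density (X : Type u) [TopologicalSpace X] : Cardinal.{u} :=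
  sInf { c | ∃ D : Set X, Cardinal.mk D = c ∧ Dense D }

/-- The weight of a space: the least cardinality of a base for the topology. -/
noncomputable def weight (X : Type u) [TopologicalSpace X] : Cardinal.{u} :=
  sInf { c | ∃ B : Set (Set X), Cardinal.mk B = c ∧ TopologicalSpace.IsTopologicalBasis B }

/-- A surjective map is irreducible if no proper closed subset maps onto the codomain. -/
def IsIrreducibleMap {K : Type*} {X : Type*} [TopologicalSpace K] [TopologicalSpace X]
    (f : K → X) : Prop :=
  Function.Surjective f ∧ ∀ A : Set K, IsClosed A → A ≠ univ → f '' A ≠ univ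

/-- `C` is an order component of `A`: a maximal convex subset of `A`. -/
def IsOrderComponent {K : Type*} [LinearOrder K] (A C : Set K) : Prop :=
  C ⊆ A ∧ C.OrdConnected ∧ ∀ C' : Set K, C ⊆ C' → C' ⊆ A → C'.OrdConnected → C' = C

/-- A map from a linearly ordered set is order-light if every order component of every
fiber is a singleton. -/
def OrderLight {K : Type*} {X : Type*} [LinearOrder K] (f : K → X) : Prop :=
  ∀ x : X, ∀ C : Set K, IsOrderComponent (f ⁻¹' {x}) C → ∃ k, C = {k}

/-- The countable chain condition: every pairwise disjoint family of nonempty open sets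
is countable. -/
def CCC (X : Type*) [TopologicalSpace X] : Prop :=
  ∀ 𝒰 : Set (Set X), (∀ U ∈ 𝒰, IsOpen U ∧ U.Nonempty) → 𝒰.PairwiseDisjoint id → 𝒰.Countable

/-- A space is non-archimedean if it has a base any two members of which are either
disjoint or comparable by inclusion. -/
def NonArchimedean (X : Type*) [TopologicalSpace X] : Prop :=
  ∃ B : Set (Set X), TopologicalSpace.IsTopologicalBasis B ∧
    ∀ U ∈ B, ∀ V ∈ B, Disjoint U V ∨ U ⊆ V ∨ V ⊆ U

/-- A space is perfectly normal if it is normal and every closed set is a Gδ-set. -/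
def PerfNormal (X : Type*) [TopologicalSpace X] : Prop :=
  NormalSpace X ∧ ∀ A : Set X, IsClosed A → IsGδ A

/-- `X` is a continuous image of some compact linearly ordered topological space
(a linearly ordered set equipped with its order topology). -/
def ContinuousImageOfCompactLOTS (X : Type u) [TopologicalSpace X] : Prop :=
  ∃ (K : Type u) (lo : LinearOrder K) (tK : TopologicalSpace K),
    letI := lo; letI := tK;
    OrderTopology K ∧ CompactSpace K ∧ ∃ f : K → X, Continuous f ∧ Function.Surjective f

/-- A closed set `A` is a strong T-set: the boundary of each connected component of the
complement consists of exactly two points, and each such component is homeomorphic to the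
open unit interval `(0,1)`. -/
def IsStrongTSet {Y : Type*} [TopologicalSpace Y] (A : Set Y) : Prop :=
  IsClosed A ∧ ∀ x ∈ Aᶜ,
    (∃ a b : Y, a ≠ b ∧ frontier (connectedComponentIn Aᶜ x) = {a, b}) ∧
    Nonempty (↥(connectedComponentIn Aᶜ x) ≃ₜ ↥(Ioo (0:ℝ) 1))

/-- Souslin's Hypothesis: every ccc LOTS is separable. -/
def SouslinHypothesis : Prop :=
  ∀ (L : Type u) (lo : LinearOrder L) (tL : TopologicalSpace L),
    letI := lo; letI := tL;
    OrderTopology L → CCC L → TopologicalSpace.SeparableSpace L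

section AuxLemmas

section Aux1
variable {L : Type*} [LinearOrder L] [TopologicalSpace L] [OrderTopology L]

lemma aux_ordConnectedComponent_isOpen {U : Set L} (hU : IsOpen U) (x : L) :
    IsOpen (Set.ordConnectedComponent U x) := by
  rw [isOpen_iff_mem_nhds]
  intro y hy
  obtain ⟨b, c, hybc, hmem, hsub⟩ :=
    exists_Icc_mem_subset_of_mem_nhds (hU.mem_nhds (Set.ordConnectedComponent_subset hy))
  refine Filter.mem_of_superset hmem fun z hz => ?_
  rw [Set.mem_ordConnectedComponent] at hy ⊢
  refine (uIcc_subset_uIcc_union_uIcc (b := y)).trans (Set.union_subset hy ?_)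
  exact (Set.ordConnected_Icc.uIcc_subset hybc hz).trans hsub

lemma aux_isGδ_of_isClosed [TopologicalSpace.SeparableSpace L] {A : Set L} (hA : IsClosed A) :
    IsGδ A := by
  obtain ⟨D, hDcnt, hDd⟩ := TopologicalSpace.exists_countable_dense L
  set U := Aᶜ with hUdef
  have hU : IsOpen U := hA.isOpen_compl
  set C : L → Set L := fun e => Set.ordConnectedComponent U e with hCdef
  set S : Set (Set L) :=
    {t | ∃ e ∈ D, ∃ d ∈ D, Set.uIcc e d ⊆ U ∧ t = Set.uIcc e d} ∪
    {t | ∃ e ∈ D, ∃ x, (IsGreatest (C e) x ∨ IsLeast (C e) x) ∧ t = Set.uIcc e x} with hSdef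
  have hScnt : S.Countable := by
    apply Set.Countable.union
    · refine Set.Countable.mono ?_ ((hDcnt.prod hDcnt).image fun p : L × L => Set.uIcc p.1 p.2)
      rintro t ⟨e, he, d, hd, -, rfl⟩
      exact ⟨(e, d), ⟨he, hd⟩, rfl⟩
    · have : {t : Set L | ∃ e ∈ D, ∃ x, (IsGreatest (C e) x ∨ IsLeast (C e) x) ∧ t = Set.uIcc e x}
          ⊆ ⋃ e ∈ D, (fun x => Set.uIcc e x) ''
            ({x | IsGreatest (C e) x} ∪ {x | IsLeast (C e) x}) := by
        rintro t ⟨e, he, x, hx, rfl⟩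
        exact Set.mem_biUnion he ⟨x, hx, rfl⟩
      refine Set.Countable.mono this (Set.Countable.biUnion hDcnt fun e _ => ?_)
      refine Set.Countable.image ?_ _
      have h1 : {x | IsGreatest (C e) x}.Subsingleton := fun a ha b hb => IsGreatest.unique ha hb
      have h2 : {x | IsLeast (C e) x}.Subsingleton := fun a ha b hb => IsLeast.unique ha hb
      exact h1.countable.union h2.countable
  have hSsub : ∀ t ∈ S, t ⊆ U := by
    rintro t (⟨e, -, d, -, hsub, rfl⟩ | ⟨e, -, x, hx, rfl⟩)
    · exact hsub
    · have hxC : x ∈ C e := by rcases hx with h | h; exacts [h.1, h.1]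
      have heU : e ∈ U := Set.nonempty_ordConnectedComponent.1 ⟨x, hxC⟩
      have heC : e ∈ C e := Set.self_mem_ordConnectedComponent.2 heU
      exact ((Set.instOrdConnectedOrdConnectedComponent (s := U) (x := e)).uIcc_subset heC
        hxC).trans Set.ordConnectedComponent_subset
  have hScl : ∀ t ∈ S, IsClosed t := by
    rintro t (⟨e, -, d, -, -, rfl⟩ | ⟨e, -, x, -, rfl⟩) <;> · rw [Set.uIcc]; exact isClosed_Icc
  have hCover : U = ⋃₀ S := by
    apply Set.Subset.antisymm
    · intro x hx
      have hxC : x ∈ C x := Set.self_mem_ordConnectedComponent.2 hx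
      have hCopen : IsOpen (C x) := aux_ordConnectedComponent_isOpen hU x
      obtain ⟨e, heC, heD⟩ := hDd.inter_open_nonempty _ hCopen ⟨x, hxC⟩
      have hkey : C e = C x := (Set.ordConnectedComponent_eq heC).symm
      have huIccC : ∀ {a b : L}, a ∈ C x → b ∈ C x → Set.uIcc a b ⊆ U := fun ha hb =>
        ((Set.instOrdConnectedOrdConnectedComponent (s := U) (x := x)).uIcc_subset ha hb).trans
          Set.ordConnectedComponent_subset
      rcases le_total e x with hex | hxe
      · by_cases hg : IsGreatest (C x) x
        · exact ⟨Set.uIcc e x, Or.inr ⟨e, heD, x, Or.inl (hkey ▸ hg), rfl⟩, Set.right_mem_uIcc⟩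
        · have hex2 : ∃ c', c' ∈ C x ∧ x < c' := by
            by_contra h
            push_neg at h
            exact hg ⟨hxC, fun b hb => h b hb⟩
          obtain ⟨c', hc'C, hxc'⟩ := hex2
          obtain ⟨d, ⟨hdC, hdx⟩, hdD⟩ :=
            hDd.inter_open_nonempty _ (hCopen.inter isOpen_Ioi) ⟨c', hc'C, hxc'⟩
          exact ⟨Set.uIcc e d, Or.inl ⟨e, heD, d, hdD, huIccC heC hdC, rfl⟩,
            Set.Icc_subset_uIcc ⟨hex, le_of_lt hdx⟩⟩
      · by_cases hg : IsLeast (C x) x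
        · exact ⟨Set.uIcc e x, Or.inr ⟨e, heD, x, Or.inr (hkey ▸ hg), rfl⟩, Set.right_mem_uIcc⟩
        · have hex2 : ∃ c', c' ∈ C x ∧ c' < x := by
            by_contra h
            push_neg at h
            exact hg ⟨hxC, fun b hb => h b hb⟩
          obtain ⟨c', hc'C, hxc'⟩ := hex2
          obtain ⟨d, ⟨hdC, hdx⟩, hdD⟩ :=
            hDd.inter_open_nonempty _ (hCopen.inter isOpen_Iio) ⟨c', hc'C, hxc'⟩
          exact ⟨Set.uIcc e d, Or.inl ⟨e, heD, d, hdD, huIccC heC hdC, rfl⟩,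
            Set.Icc_subset_uIcc' ⟨le_of_lt hdx, hxe⟩⟩
    · exact Set.sUnion_subset hSsub
  have hAeq : A = ⋂₀ (compl '' S) := by
    rw [← compl_compl A, ← hUdef, hCover, Set.compl_sUnion]
  rw [hAeq]
  exact IsGδ.sInter (by rintro s ⟨t, ht, rfl⟩; exact ((hScl t ht).isOpen_compl).isGδ)
    (hScnt.image _)

end Aux1


lemma aux_countablyGenerated_nhds_of_isGδ_singleton {Y : Type*} [TopologicalSpace Y]
    [CompactSpace Y] [T2Space Y] {x : Y} (h : IsGδ ({x} : Set Y)) :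
    (𝓝 x).IsCountablyGenerated := by
  obtain ⟨T, hTopen, hTcnt, hTeq⟩ := h
  have hne : (insert Set.univ T).Nonempty := ⟨_, Set.mem_insert _ _⟩
  obtain ⟨F, hF⟩ := Set.Countable.exists_eq_range (hTcnt.insert Set.univ) hne
  have hFopen : ∀ n, IsOpen (F n) := by
    intro n
    have : F n ∈ insert Set.univ T := by rw [hF]; exact ⟨n, rfl⟩
    rcases this with h | h
    · rw [h]; exact isOpen_univ
    · exact hTopen _ h
  have hxT : x ∈ ⋂₀ T := by rw [← hTeq]; exact rfl
  have hxF : ∀ n, x ∈ F n := by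
    intro n
    have : F n ∈ insert Set.univ T := by rw [hF]; exact ⟨n, rfl⟩
    rcases this with h | h
    · rw [h]; trivial
    · exact hxT _ h
  have hInt : (⋂ n, F n) = {x} := by
    have h1 : (⋂ n, F n) = ⋂₀ (insert Set.univ T) := by
      rw [hF, Set.sInter_range]
    rw [h1, Set.sInter_insert, Set.univ_inter, ← hTeq]
  have shrink : ∀ O : Set Y, IsOpen O → x ∈ O →
      ∃ V : Set Y, IsOpen V ∧ x ∈ V ∧ closure V ⊆ O := by
    intro O hO hxO
    obtain ⟨V, hV, hxV, hcV⟩ := normal_exists_closure_subset isClosed_singleton hO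
      (Set.singleton_subset_iff.2 hxO)
    exact ⟨V, hV, Set.singleton_subset_iff.1 hxV, hcV⟩
  choose V hVopen hxV hcV using fun n => shrink (F n) (hFopen n) (hxF n)
  have hbasis : (𝓝 x).HasBasis (fun _ : Finset ℕ => True) (fun t => ⋂ i ∈ t, V i) := by
    constructor
    intro s
    constructor
    · intro hs
      have hxO : x ∈ interior s := mem_interior_iff_mem_nhds.2 hs
      have hempty : closure (V 0) ∩ ⋂ n, (closure (V n) ∩ (interior s)ᶜ) = ∅ := by
        apply Set.eq_empty_iff_forall_notMem.2
        rintro y ⟨hy0, hy⟩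
        simp only [Set.mem_iInter, Set.mem_inter_iff] at hy
        have hyx : y ∈ ({x} : Set Y) := by
          rw [← hInt]
          exact Set.mem_iInter.2 fun n => hcV n (hy n).1
        rw [Set.mem_singleton_iff] at hyx
        exact (hy 0).2 (hyx ▸ hxO)
      obtain ⟨t, ht⟩ := IsCompact.elim_finite_subfamily_closed
        (isClosed_closure.isCompact)
        (fun n => closure (V n) ∩ (interior s)ᶜ)
        (fun n => isClosed_closure.inter (isClosed_compl_iff.2 isOpen_interior)) hempty
      refine ⟨insert 0 t, trivial, fun y hy => ?_⟩
      simp only [Set.mem_iInter] at hy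
      by_contra hns
      have hnint : y ∉ interior s := fun hin => hns (interior_subset hin)
      have : y ∈ closure (V 0) ∩ ⋂ i ∈ t, (closure (V i) ∩ (interior s)ᶜ) := by
        refine ⟨subset_closure (hy 0 (Finset.mem_insert_self 0 t)), ?_⟩
        refine Set.mem_iInter₂.2 fun i hi => ⟨subset_closure (hy i (Finset.mem_insert_of_mem hi)), hnint⟩
      rw [ht] at this
      exact this
    · rintro ⟨t, -, hts⟩
      refine Filter.mem_of_superset ?_ hts
      exact (Filter.biInter_mem t.finite_toSet).2 fun i _ => (hVopen i).mem_nhds (hxV i)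
  exact hbasis.isCountablyGenerated

lemma aux_secondCountable_of_countable {E : Type*} [TopologicalSpace E] [Countable E]
    [FirstCountableTopology E] : SecondCountableTopology E := by
  choose b hb using fun x : E => (𝓝 x).exists_antitone_basis
  refine TopologicalSpace.IsTopologicalBasis.secondCountableTopology
    (b := ⋃ x : E, Set.range fun n => interior (b x n)) ?_ ?_
  · refine TopologicalSpace.isTopologicalBasis_of_isOpen_of_nhds ?_ ?_
    · rintro u hu
      simp only [Set.mem_iUnion, Set.mem_range] at hu
      obtain ⟨x, n, rfl⟩ := hu
      exact isOpen_interior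
    · intro y u hyu hu
      obtain ⟨n, -, hsub⟩ := (hb y).toHasBasis.mem_iff.1 (hu.mem_nhds hyu)
      refine ⟨interior (b y n), ?_, ?_, interior_subset.trans hsub⟩
      · exact Set.mem_iUnion.2 ⟨y, Set.mem_range.2 ⟨n, rfl⟩⟩
      · exact mem_interior_iff_mem_nhds.2 ((hb y).toHasBasis.mem_of_mem trivial)
  · exact Set.countable_iUnion fun x => Set.countable_range _

end AuxLemmas

theorem SH_dense_metrizable (hSH : SouslinHypothesis.{u}) (X : Type u)
    [TopologicalSpace X] [T2Space X] [CompactSpace X] (hccc : CCC X)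
    (hX : ContinuousImageOfCompactLOTS X) :
    ∃ D : Set X, Dense D ∧ TopologicalSpace.MetrizableSpace ↥D := by
  
  classical
  obtain ⟨K, lo, tK, hOT, hK, f, hf, hfs⟩ := hX
  letI := lo
  letI := tK
  haveI := hOT
  haveI := hK
  -- Step 1 (Zorn): find a minimal closed subset of `K` mapping onto `X`.
  set S : Set (Set K) := {A | IsClosed A ∧ f '' A = univ} with hSdef
  have hKS : univ ∈ S := ⟨isClosed_univ, by rw [Set.image_univ]; exact Set.range_eq_univ.2 hfs⟩
  have hchain : ∀ c ⊆ S, IsChain (· ⊆ ·) c → c.Nonempty → ∃ lb ∈ S, ∀ s ∈ c, lb ⊆ s := by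
    intro c hcS hch hcne
    refine ⟨⋂₀ c, ⟨isClosed_sInter fun A hA => (hcS hA).1, ?_⟩,
      fun s hs => Set.sInter_subset_of_mem hs⟩
    apply Set.eq_univ_of_forall
    intro x
    haveI : Nonempty c := hcne.to_subtype
    have hdir : Directed (fun a b : Set K => a ⊇ b) (fun A : c => A.1 ∩ f ⁻¹' {x}) := by
      intro A B
      rcases hch.total A.2 B.2 with h | h
      · exact ⟨A, le_refl _, fun y hy => ⟨h hy.1, hy.2⟩⟩
      · exact ⟨B, fun y hy => ⟨h hy.1, hy.2⟩, le_refl _⟩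
    have hne := IsCompact.nonempty_iInter_of_directed_nonempty_isCompact_isClosed
      (fun A : c => A.1 ∩ f ⁻¹' {x}) hdir
      (fun A => by
        have : x ∈ f '' A.1 := by rw [(hcS A.2).2]; trivial
        obtain ⟨k, hkA, hfk⟩ := this
        exact ⟨k, hkA, hfk⟩)
      (fun A => ((hcS A.2).1.inter (isClosed_singleton.preimage hf)).isCompact)
      (fun A => (hcS A.2).1.inter (isClosed_singleton.preimage hf))
    obtain ⟨k, hk⟩ := hne
    have hk' := Set.mem_iInter.1 hk
    obtain ⟨A₀⟩ := (inferInstance : Nonempty c)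
    refine ⟨k, fun A hA => (hk' ⟨A, hA⟩).1, (hk' A₀).2⟩
  obtain ⟨M, -, hMmin⟩ := zorn_superset_nonempty S hchain univ hKS
  have hMS : M ∈ S := hMmin.prop
  have hMcl : IsClosed M := hMS.1
  haveI hMcpt : CompactSpace ↥M := isCompact_iff_compactSpace.mp hMcl.isCompact
  set g : ↥M → X := fun m => f m.1 with hgdef
  have hg : Continuous g := hf.comp continuous_subtype_val
  have hgs : Function.Surjective g := by
    intro x
    have : x ∈ f '' M := by rw [hMS.2]; trivial
    obtain ⟨k, hkM, hfk⟩ := this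
    exact ⟨⟨k, hkM⟩, hfk⟩
  -- Step 2: the subspace topology on `M` is the order topology of the induced order.
  have hle : (instTopologicalSpaceSubtype : TopologicalSpace ↥M) ≤ Preorder.topology ↥M := by
    apply le_generateFrom
    rintro s ⟨a, rfl | rfl⟩
    · have : {b : ↥M | a < b} = Subtype.val ⁻¹' Set.Ioi a.1 := by
        ext y
        exact ⟨fun h => Subtype.coe_lt_coe.2 h, fun h => Subtype.coe_lt_coe.1 h⟩
      rw [show Ioi a = {b : ↥M | a < b} from rfl, this]
      exact isOpen_Ioi.preimage continuous_subtype_val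
    · have : {b : ↥M | b < a} = Subtype.val ⁻¹' Set.Iio a.1 := by
        ext y
        exact ⟨fun h => Subtype.coe_lt_coe.2 h, fun h => Subtype.coe_lt_coe.1 h⟩
      rw [show Iio a = {b : ↥M | b < a} from rfl, this]
      exact isOpen_Iio.preimage continuous_subtype_val
  have hge : Preorder.topology ↥M ≤ (instTopologicalSpaceSubtype : TopologicalSpace ↥M) := by
    have hOTo : @OrderTopology ↥M (Preorder.topology ↥M) _ := @OrderTopology.mk ↥M (Preorder.topology ↥M) _ rfl
    have hT2o : @T2Space ↥M (Preorder.topology ↥M) :=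
      @OrderClosedTopology.to_t2Space ↥M (Preorder.topology ↥M) _
        (@OrderTopology.to_orderClosedTopology ↥M (Preorder.topology ↥M) _ hOTo)
    intro u hu
    have hclosed : @IsClosed ↥M instTopologicalSpaceSubtype uᶜ :=
      @isClosed_compl_iff ↥M instTopologicalSpaceSubtype u |>.2 hu
    have hcpt : IsCompact uᶜ := hclosed.isCompact
    have hid : @Continuous ↥M ↥M instTopologicalSpaceSubtype (Preorder.topology ↥M) id :=
      continuous_id_iff_le.2 hle
    have hcpt' : @IsCompact ↥M (Preorder.topology ↥M) uᶜ := by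
      have h0 := @IsCompact.image ↥M ↥M instTopologicalSpaceSubtype (Preorder.topology ↥M)
        uᶜ id hcpt hid
      rwa [Set.image_id] at h0
    have hclosed' : @IsClosed ↥M (Preorder.topology ↥M) uᶜ :=
      @IsCompact.isClosed ↥M (Preorder.topology ↥M) hT2o uᶜ hcpt'
    exact (@isClosed_compl_iff ↥M (Preorder.topology ↥M) u).1 hclosed'
  have htopo : (instTopologicalSpaceSubtype : TopologicalSpace ↥M) = Preorder.topology ↥M :=
    le_antisymm hle hge
  haveI hOTM : OrderTopology ↥M := ⟨htopo⟩
  -- Step 3: `M` satisfies the countable chain condition, because `g` is irreducible.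
  have hcccM : CCC ↥M := by
    intro 𝒰 h𝒰 hdisj
    set V : Set ↥M → Set X := fun u => (g '' uᶜ)ᶜ with hVdef
    have hVopen : ∀ u ∈ 𝒰, IsOpen (V u) := fun u hu =>
      ((h𝒰 u hu).1.isClosed_compl.isCompact.image hg).isClosed.isOpen_compl
    have hpre : ∀ u : Set ↥M, g ⁻¹' V u ⊆ u := by
      intro u k hk
      by_contra hku
      exact hk ⟨k, hku, rfl⟩
    have hVne : ∀ u ∈ 𝒰, (V u).Nonempty := by
      intro u hu
      rw [Set.nonempty_compl]
      intro huniv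
      have hucl : IsClosed (uᶜ : Set ↥M) := (h𝒰 u hu).1.isClosed_compl
      have hune : (uᶜ : Set ↥M) ≠ univ := by
        obtain ⟨z, hz⟩ := (h𝒰 u hu).2
        intro hcompl
        exact (hcompl ▸ (Set.mem_univ z) : z ∈ (uᶜ : Set ↥M)) hz
      have h1 : IsClosed (Subtype.val '' (uᶜ : Set ↥M)) :=
        (hucl.isCompact.image continuous_subtype_val).isClosed
      have h2 : f '' (Subtype.val '' (uᶜ : Set ↥M)) = univ := by
        rw [← Set.image_comp]
        exact huniv
      have hsub : Subtype.val '' (uᶜ : Set ↥M) ⊆ M := by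
        rintro _ ⟨k, -, rfl⟩
        exact k.2
      have hMsub := hMmin.2 ⟨h1, h2⟩ hsub
      apply hune
      apply Set.eq_univ_of_forall
      intro m
      obtain ⟨k, hku, hkm⟩ := hMsub m.2
      exact (Subtype.ext hkm : k = m) ▸ hku
    have hVdisj : ∀ u ∈ 𝒰, ∀ v ∈ 𝒰, u ≠ v → V u ∩ V v = ∅ := by
      intro u hu v hv huv
      apply Set.eq_empty_iff_forall_notMem.2
      rintro x ⟨hxu, hxv⟩
      obtain ⟨k, rfl⟩ := hgs x
      exact Set.disjoint_iff.1 (hdisj hu hv huv) ⟨hpre u hxu, hpre v hxv⟩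
    have hVinj : Set.InjOn V 𝒰 := by
      intro u hu v hv huv
      by_contra hne
      have h0 := hVdisj u hu v hv hne
      rw [huv, Set.inter_self] at h0
      exact (hVne v hv).ne_empty h0
    have h𝒱 : (V '' 𝒰).Countable := by
      apply hccc
      · rintro _ ⟨u, hu, rfl⟩
        exact ⟨hVopen u hu, hVne u hu⟩
      · rintro _ ⟨u, hu, rfl⟩ _ ⟨v, hv, rfl⟩ hne
        have huv : u ≠ v := fun h => hne (by rw [h])
        exact Set.disjoint_iff_inter_eq_empty.2 (hVdisj u hu v hv huv)
    exact Set.countable_of_injective_of_countable_image hVinj h𝒱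
  -- Step 4: Souslin's Hypothesis gives separability of `M`, hence of `X`.
  haveI hsepM : TopologicalSpace.SeparableSpace ↥M := hSH ↥M _ _ hOTM hcccM
  obtain ⟨D, hDcnt, hDd⟩ := TopologicalSpace.exists_countable_dense ↥M
  refine ⟨g '' D, ?_, ?_⟩
  · rw [dense_iff_closure_eq]
    apply Set.eq_univ_of_univ_subset
    calc univ = Set.range g := hgs.range_eq.symm
      _ = g '' closure D := by rw [hDd.closure_eq, Set.image_univ]
      _ ⊆ closure (g '' D) := image_closure_subset_closure_image hg
  -- Step 5: every singleton of `X` is Gδ, hence `X` is first countable, so the countable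
  -- dense set is a metrizable subspace.
  · haveI : FirstCountableTopology X := by
      constructor
      intro x
      apply aux_countablyGenerated_nhds_of_isGδ_singleton
      have hfib : IsGδ (g ⁻¹' {x}) := aux_isGδ_of_isClosed (isClosed_singleton.preimage hg)
      obtain ⟨T, hTopen, hTcnt, hTeq⟩ := hfib
      refine ⟨(fun t => (g '' tᶜ)ᶜ) '' T, ?_, hTcnt.image _, ?_⟩
      · rintro _ ⟨t, ht, rfl⟩
        exact ((hTopen t ht).isClosed_compl.isCompact.image hg).isClosed.isOpen_compl
      · apply Set.Subset.antisymm
        · rintro y hy _ ⟨t, ht, rfl⟩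
          rw [Set.mem_singleton_iff] at hy
          subst hy
          rintro ⟨k, hkt, hgk⟩
          have hk : k ∈ g ⁻¹' {y} := by rw [Set.mem_preimage, hgk]; rfl
          rw [hTeq] at hk
          exact hkt (hk t ht)
        · intro y hy
          obtain ⟨k, rfl⟩ := hgs y
          have hk : k ∈ ⋂₀ T := by
            intro t ht
            have h0 := hy _ ⟨t, ht, rfl⟩
            by_contra hkt
            exact h0 ⟨k, hkt, rfl⟩
          rw [← hTeq] at hk
          exact hk
    have hEcnt : (g '' D).Countable := hDcnt.image g
    haveI : Countable ↥(g '' D) := hEcnt.to_subtype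
    haveI : SecondCountableTopology ↥(g '' D) := aux_secondCountable_of_countable
    infer_instance
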